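/- Let μ and μ' be two probability measures on a measurable space X, both quasi-invariant and ergodic with respect to an action of a countable group G by measurable bijections. If μ and μ' are not equivalent, then they are disjoint: there exists a measurable set F with μ(F) = 1 and μ'(F) = 0. -/

import Mathlib

open MeasureTheory

/-- Auxiliary lemma: if `ν` is not absolutely continuous w.r.t. `ν'`, with `ν'`
quasi-invariant and `ν` ergodic, then there is a measurable set of full `ν`-measure
and zero `ν'`-measure. -/
lemma stmt11_aux {G : Type*} [Group G] [Countable G]
    {X : Type*} [MeasurableSpace X]
    (π : G → (X ≃ᵐ X))
    (hπmul : ∀ g h : G, ∀ x : X, π (g * h) x = π g (π h x))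
    (hπone : ∀ x : X, π (1 : G) x = x)
    (ν ν' : Measure X)
    (hqi' : ∀ (g : G) (E : Set X), MeasurableSet E → (ν' E = 0 ↔ ν' (π g '' E) = 0))
    (herg : ∀ E : Set X, MeasurableSet E → (∀ g : G, π g '' E = E) →
      ν E = 0 ∨ ν E = 1)
    (hne : ¬ ν ≪ ν') :
    ∃ F : Set X, MeasurableSet F ∧ ν F = 1 ∧ ν' F = 0 := by
  obtain ⟨s, hs0, hs⟩ : ∃ s : Set X, ν' s = 0 ∧ ν s ≠ 0 := by
    by_contra h
    push_neg at h
    exact hne fun s hs => h s hs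
  set E : Set X := toMeasurable ν' s with hEdef
  have hE : MeasurableSet E := measurableSet_toMeasurable ν' s
  have hE0 : ν' E = 0 := by rw [hEdef, measure_toMeasurable]; exact hs0
  have hEν : ν E ≠ 0 := fun h =>
    hs (le_antisymm (h ▸ measure_mono (subset_toMeasurable ν' s)) (zero_le))
  set S : Set X := ⋃ g : G, π g '' E with hSdef
  have hSmeas : MeasurableSet S :=
    MeasurableSet.iUnion fun g => (π g).measurableSet_image.2 hE
  have hS0 : ν' S = 0 := measure_iUnion_null fun g => (hqi' g E hE).1 hE0
  have key : ∀ g h : G, π g '' (π h '' E) = π (g * h) '' E := by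
    intro g h
    rw [← Set.image_comp]
    exact Set.image_congr fun x _ => (hπmul g h x).symm
  have hinv : ∀ g : G, π g '' S = S := by
    intro g
    rw [hSdef, Set.image_iUnion]
    ext x
    simp only [Set.mem_iUnion]
    constructor
    · rintro ⟨h, hx⟩
      exact ⟨g * h, (key g h) ▸ hx⟩
    · rintro ⟨h, hx⟩
      refine ⟨g⁻¹ * h, ?_⟩
      rw [key g (g⁻¹ * h), mul_inv_cancel_left]
      exact hx
  have hES : E ⊆ S := by
    have h1 : π (1 : G) '' E = E := by
      have : ⇑(π (1 : G)) = id := funext hπone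
      rw [this, Set.image_id]
    exact h1 ▸ Set.subset_iUnion (fun g : G => π g '' E) (1 : G)
  have hS1 : ν S = 1 := by
    rcases herg S hSmeas hinv with h | h
    · exact absurd (le_antisymm (h ▸ measure_mono hES) (zero_le)) hEν
    · exact h
  exact ⟨S, hSmeas, hS1, hS0⟩

/-- Two ergodic quasi-invariant probability measures for an action of a
countable group are either equivalent or not comparable: if `μ'` is absolutely
continuous with respect to `μ`, then they are mutually absolutely continuous;
if they are not equivalent then they are disjoint. -/
theorem stmt11 {G : Type*} [Group G] [Countable G]
    {X : Type*} [MeasurableSpace X]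
    (π : G → (X ≃ᵐ X))
    (hπmul : ∀ g h : G, ∀ x : X, π (g * h) x = π g (π h x))
    (hπone : ∀ x : X, π (1 : G) x = x)
    (μ μ' : Measure X) [IsProbabilityMeasure μ] [IsProbabilityMeasure μ']
    (hqi : ∀ (g : G) (E : Set X), MeasurableSet E → (μ E = 0 ↔ μ (π g '' E) = 0))
    (hqi' : ∀ (g : G) (E : Set X), MeasurableSet E → (μ' E = 0 ↔ μ' (π g '' E) = 0))
    (herg : ∀ E : Set X, MeasurableSet E → (∀ g : G, π g '' E = E) →
      μ E = 0 ∨ μ E = 1)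
    (herg' : ∀ E : Set X, MeasurableSet E → (∀ g : G, π g '' E = E) →
      μ' E = 0 ∨ μ' E = 1)
    (hne : ¬ (μ ≪ μ' ∧ μ' ≪ μ)) :
    ∃ F : Set X, MeasurableSet F ∧ μ F = 1 ∧ μ' F = 0 := by
  rw [not_and_or] at hne
  rcases hne with h | h
  · exact stmt11_aux π hπmul hπone μ μ' hqi' herg h
  · obtain ⟨F, hF, hF1, hF0⟩ := stmt11_aux π hπmul hπone μ' μ hqi herg' h
    refine ⟨Fᶜ, hF.compl, ?_, ?_⟩
    · rw [prob_compl_eq_one_iff hF]; exact hF0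
    · rw [prob_compl_eq_zero_iff hF]; exact hF1
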